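/- Let S be a real n×N matrix with full row rank n, and let Δ_S = max_{1≤j≤N} ‖S e_j‖ denote its radius (the maximum Euclidean norm of its columns). Let x⁰ ∈ ℝⁿ and let f : ℝⁿ → ℝ be twice continuously differentiable on an open set containing the closed ball B(x⁰; Δ_S), with ∇f Lipschitz continuous with constant L_{∇f} on B(x⁰; Δ_S). Define the generalized simplex gradient ∇_s f(x⁰;S) = (S Sᵀ)⁻¹ S δ_f(x⁰;S), where δ_f(x⁰;S) ∈ ℝᴺ has j-th entry f(x⁰ + S e_j) − f(x⁰). Let Ŝ = S/Δ_S. Then ‖∇_s f(x⁰;S) − ∇f(x⁰)‖ ≤ (√N / 2) · L_{∇f} · ‖(Ŝ Ŝᵀ)⁻¹ Ŝ‖ · Δ_S, where the matrix norm is the operator norm induced by the Euclidean norm. -/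

import Mathlib

noncomputable section

/-- Interpret a plain vector in `Fin n → ℝ` as an element of Euclidean space,
so that `‖·‖` is the Euclidean norm. -/
def vecE {n : ℕ} (v : Fin n → ℝ) : EuclideanSpace ℝ (Fin n) :=
  (EuclideanSpace.equiv (Fin n) ℝ).symm v

/-- The operator norm of a matrix induced by the Euclidean norms. -/
def l2opNorm {m n : ℕ} (A : Matrix (Fin m) (Fin n) ℝ) : ℝ :=
  ‖LinearMap.toContinuousLinearMap (Matrix.toEuclideanLin A)‖

open Metric Set Matrix

lemma taylor_quad {E : Type*} [NormedAddCommGroup E] [InnerProductSpace ℝ E] [CompleteSpace E]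
    (f : E → ℝ) (U : Set E) (hU : IsOpen U) (x0 : E) (Δ : ℝ)
    (hsub : closedBall x0 Δ ⊆ U) (hf : ContDiffOn ℝ 2 f U)
    (L : NNReal) (hlip : LipschitzOnWith L (gradient f) (closedBall x0 Δ))
    (v : E) (hv : ‖v‖ ≤ Δ) :
    |f (x0 + v) - f x0 - inner ℝ (gradient f x0) v| ≤ (L : ℝ) / 2 * Δ ^ 2 := by
  have hΔ0 : (0:ℝ) ≤ Δ := le_trans (norm_nonneg v) hv
  have hmem : ∀ t : ℝ, t ∈ Icc (0:ℝ) 1 → x0 + t • v ∈ closedBall x0 Δ := by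
    intro t ht
    simp only [mem_closedBall, dist_eq_norm, add_sub_cancel_left, norm_smul,
      Real.norm_eq_abs, abs_of_nonneg ht.1]
    calc t * ‖v‖ ≤ 1 * Δ := by
          apply mul_le_mul ht.2 hv (norm_nonneg v) zero_le_one
      _ = Δ := one_mul Δ
  have hdiff : ∀ t : ℝ, t ∈ Icc (0:ℝ) 1 → DifferentiableAt ℝ f (x0 + t • v) := by
    intro t ht
    exact (hf.differentiableOn (by norm_num)).differentiableAt
      (hU.mem_nhds (hsub (hmem t ht)))
  set c : ℝ := inner ℝ (gradient f x0) v with hc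
  set g : ℝ → ℝ := fun t => f (x0 + t • v) - f x0 - t * c with hg
  set g' : ℝ → ℝ := fun t => inner ℝ (gradient f (x0 + t • v)) v - c with hg'
  have hgd : ∀ t : ℝ, t ∈ Icc (0:ℝ) 1 → HasDerivAt g (g' t) t := by
    intro t ht
    have h1 : HasDerivAt (fun s : ℝ => x0 + s • v) v t := by
      simpa using ((hasDerivAt_id t).smul_const v).const_add x0
    have h2 : HasGradientAt f (gradient f (x0 + t • v)) (x0 + t • v) :=
      (hdiff t ht).hasGradientAt
    have h3 : HasFDerivAt f ((InnerProductSpace.toDual ℝ E) (gradient f (x0 + t • v)))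
        (x0 + t • v) := hasGradientAt_iff_hasFDerivAt.mp h2
    have h4 : HasDerivAt (fun s : ℝ => f (x0 + s • v))
        (inner ℝ (gradient f (x0 + t • v)) v) t := by
      have h5 := h3.comp_hasDerivAt t h1
      rw [InnerProductSpace.toDual_apply_apply] at h5
      exact h5
    exact (h4.sub_const (f x0)).sub (hasDerivAt_mul_const c)
  have hbound : ∀ t : ℝ, t ∈ Ico (0:ℝ) 1 → ‖g' t‖ ≤ ((L:ℝ) * Δ ^ 2) * t := by
    intro t ht
    have htI : t ∈ Icc (0:ℝ) 1 := ⟨ht.1, le_of_lt ht.2⟩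
    have h5 : ‖gradient f (x0 + t • v) - gradient f x0‖ ≤ (L:ℝ) * (t * ‖v‖) := by
      have := hlip.norm_sub_le (hmem t htI) (mem_closedBall_self hΔ0)
      simpa [norm_smul, Real.norm_eq_abs, abs_of_nonneg ht.1] using this
    have h6 : g' t = inner ℝ (gradient f (x0 + t • v) - gradient f x0) v := by
      simp [hg', hc, inner_sub_left]
    rw [h6]
    calc ‖(inner ℝ (gradient f (x0 + t • v) - gradient f x0) v : ℝ)‖
        ≤ ‖gradient f (x0 + t • v) - gradient f x0‖ * ‖v‖ := norm_inner_le_norm _ _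
      _ ≤ ((L:ℝ) * (t * ‖v‖)) * ‖v‖ := by
          apply mul_le_mul_of_nonneg_right h5 (norm_nonneg v)
      _ ≤ ((L:ℝ) * (t * Δ)) * Δ := by
          apply mul_le_mul (mul_le_mul_of_nonneg_left
            (mul_le_mul_of_nonneg_left hv ht.1) (NNReal.coe_nonneg L))
            hv (norm_nonneg v)
          exact mul_nonneg (NNReal.coe_nonneg L) (mul_nonneg ht.1 hΔ0)
      _ = ((L:ℝ) * Δ ^ 2) * t := by ring
  have key := image_norm_le_of_norm_deriv_right_le_deriv_boundary
    (f := g) (f' := g') (a := 0) (b := 1)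
    (fun t ht => ((hgd t ht).continuousAt).continuousWithinAt)
    (fun t ht => ((hgd t ⟨ht.1, le_of_lt ht.2⟩).hasDerivWithinAt))
    (B := fun t => (L:ℝ) * Δ ^ 2 / 2 * t ^ 2) (B' := fun t => ((L:ℝ) * Δ ^ 2) * t)
    (by simp [hg]) (fun t => by
      have : HasDerivAt (fun s : ℝ => (L:ℝ) * Δ ^ 2 / 2 * s ^ 2)
          ((L:ℝ) * Δ ^ 2 / 2 * (2 * t)) t := by
        exact (hasDerivAt_pow 2 t).const_mul _ |>.congr_deriv (by ring)
      exact this.congr_deriv (by ring)) hbound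
  have h1 := key (right_mem_Icc.mpr zero_le_one)
  simp only [hg, one_smul, one_mul, Real.norm_eq_abs] at h1
  calc |f (x0 + v) - f x0 - c| ≤ (L:ℝ) * Δ ^ 2 / 2 * 1 ^ 2 := h1
    _ = (L:ℝ) / 2 * Δ ^ 2 := by ring

lemma vecE_mulVec_norm_le {m n : ℕ} (A : Matrix (Fin m) (Fin n) ℝ) (x : Fin n → ℝ) :
    ‖vecE (A.mulVec x)‖ ≤ l2opNorm A * ‖vecE x‖ := by
  have h : vecE (A.mulVec x) =
      LinearMap.toContinuousLinearMap (Matrix.toEuclideanLin A) (vecE x) := by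
    simp [vecE, Matrix.toEuclideanLin_apply]
  rw [h]
  exact ContinuousLinearMap.le_opNorm _ _

lemma l2opNorm_smul {m n : ℕ} (c : ℝ) (A : Matrix (Fin m) (Fin n) ℝ) :
    l2opNorm (c • A) = |c| * l2opNorm A := by
  unfold l2opNorm
  rw [show Matrix.toEuclideanLin (c • A) = c • Matrix.toEuclideanLin A from _root_.map_smul _ _ _]
  rw [show LinearMap.toContinuousLinearMap (c • Matrix.toEuclideanLin A)
      = c • LinearMap.toContinuousLinearMap (Matrix.toEuclideanLin A) from _root_.map_smul _ _ _]
  rw [show |c| = ‖c‖ from rfl]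
  exact norm_smul c (LinearMap.toContinuousLinearMap (Matrix.toEuclideanLin A))

lemma norm_vecE_le {N : ℕ} (hN : 0 < N) (w : Fin N → ℝ) (c : ℝ)
    (h : ∀ j, |w j| ≤ c) : ‖vecE w‖ ≤ Real.sqrt N * c := by
  have hc : 0 ≤ c := le_trans (abs_nonneg _) (h ⟨0, hN⟩)
  rw [show ‖vecE w‖ = Real.sqrt (∑ j, ‖w j‖ ^ 2) from EuclideanSpace.norm_eq _]
  have : (∑ j, ‖w j‖ ^ 2) ≤ N * c ^ 2 := by
    calc (∑ j : Fin N, ‖w j‖ ^ 2) ≤ ∑ j : Fin N, c ^ 2 := by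
          apply Finset.sum_le_sum
          intro j _
          have := h j
          rw [Real.norm_eq_abs]
          nlinarith [abs_nonneg (w j)]
      _ = N * c ^ 2 := by simp [Finset.sum_const, mul_comm]
  calc Real.sqrt (∑ j, ‖w j‖ ^ 2) ≤ Real.sqrt (N * c ^ 2) := Real.sqrt_le_sqrt this
    _ = Real.sqrt N * c := by
        rw [Real.sqrt_mul (Nat.cast_nonneg N), Real.sqrt_sq hc]

lemma isUnit_of_rank_eq {n : ℕ} (A : Matrix (Fin n) (Fin n) ℝ) (h : A.rank = n) : IsUnit A := by
  rw [← Matrix.mulVec_surjective_iff_isUnit]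
  have : LinearMap.range A.mulVecLin = ⊤ := by
    apply Submodule.eq_top_of_finrank_eq
    simpa [Matrix.rank] using h
  intro v
  exact (LinearMap.range_eq_top.mp this) v

/-- Classical error bound for the generalized simplex gradient over a matrix `S`
of full row rank: `‖∇ₛf(x⁰;S) − ∇f(x⁰)‖ ≤ (√N/2)·L_{∇f}·‖(ŜŜᵀ)⁻¹Ŝ‖·Δ_S`. -/
theorem gsg_classical_error_bound
    (n N : ℕ) (hN : 0 < N)
    (S : Matrix (Fin n) (Fin N) ℝ) (hrank : S.rank = n)
    (ΔS : ℝ) (hΔS : ΔS = ⨆ j : Fin N, ‖vecE (fun i => S i j)‖)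
    (x0 : EuclideanSpace ℝ (Fin n)) (f : EuclideanSpace ℝ (Fin n) → ℝ)
    (U : Set (EuclideanSpace ℝ (Fin n))) (hU : IsOpen U)
    (hsub : Metric.closedBall x0 ΔS ⊆ U)
    (hf : ContDiffOn ℝ 2 f U)
    (L : NNReal)
    (hlip : LipschitzOnWith L (gradient f) (Metric.closedBall x0 ΔS)) :
    ‖vecE (Matrix.mulVec ((S * S.transpose)⁻¹ * S)
        (fun j => f (x0 + vecE (fun i => S i j)) - f x0)) - gradient f x0‖
      ≤ (Real.sqrt N / 2) * (L : ℝ) *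
          l2opNorm (((ΔS⁻¹ • S) * (ΔS⁻¹ • S).transpose)⁻¹ * (ΔS⁻¹ • S)) * ΔS := by
  -- basic facts about ΔS
  have hcol : ∀ j, ‖vecE (fun i => S i j)‖ ≤ ΔS := by
    intro j
    rw [hΔS]
    exact le_ciSup (Set.Finite.bddAbove (Set.finite_range
      (fun j : Fin N => ‖vecE (fun i => S i j)‖))) j
  have hΔ0 : 0 ≤ ΔS := le_trans (norm_nonneg _) (hcol ⟨0, hN⟩)
  -- degenerate case n = 0
  rcases Nat.eq_zero_or_pos n with hn | hn
  · subst hn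
    have hL : ‖vecE (Matrix.mulVec ((S * S.transpose)⁻¹ * S)
        (fun j => f (x0 + vecE (fun i => S i j)) - f x0)) - gradient f x0‖ = 0 := by
      rw [norm_eq_zero]
      apply Subsingleton.elim
    rw [hL]
    have h1 : 0 ≤ l2opNorm (((ΔS⁻¹ • S) * (ΔS⁻¹ • S).transpose)⁻¹ * (ΔS⁻¹ • S)) :=
      norm_nonneg _
    have h2 : 0 ≤ Real.sqrt N / 2 := by positivity
    have h3 : (0:ℝ) ≤ L := NNReal.coe_nonneg L
    exact mul_nonneg (mul_nonneg (mul_nonneg h2 h3) h1) hΔ0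
  -- main case
  have hΔpos : 0 < ΔS := by
    rcases lt_or_eq_of_le hΔ0 with h | h
    · exact h
    · exfalso
      have hS0 : S = 0 := by
        ext i j
        have h1 : ‖vecE (fun i => S i j)‖ ≤ 0 := by rw [h]; exact hcol j
        have h2 : vecE (fun i => S i j) = 0 :=
          norm_eq_zero.mp (le_antisymm h1 (norm_nonneg _))
        have h3 : (fun i => S i j) = ((EuclideanSpace.equiv (Fin n) ℝ) 0 : Fin n → ℝ) := by
          rw [← h2]; rfl
        have := congrFun h3 i
        simpa using this
      rw [hS0, Matrix.rank_zero] at hrank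
      omega
  have hunit : IsUnit (S * S.transpose) := by
    apply isUnit_of_rank_eq
    rw [Matrix.rank_self_mul_transpose, hrank]
  have hdet : IsUnit (S * S.transpose).det := (Matrix.isUnit_iff_isUnit_det _).mp hunit
  set M : Matrix (Fin n) (Fin N) ℝ := (S * S.transpose)⁻¹ * S with hM
  have hMSt : M * S.transpose = 1 := by
    rw [hM, Matrix.mul_assoc]
    exact Matrix.nonsing_inv_mul _ hdet
  -- gradient as plain vector
  set g0 : EuclideanSpace ℝ (Fin n) := gradient f x0 with hg0
  set g0p : Fin n → ℝ := fun i => g0 i with hg0p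
  have hvecEg0 : vecE g0p = g0 := rfl
  set δ : Fin N → ℝ := fun j => f (x0 + vecE (fun i => S i j)) - f x0 with hδ
  set e : Fin N → ℝ := S.transpose.mulVec g0p with he
  have hMe : M.mulVec e = g0p := by
    rw [he, Matrix.mulVec_mulVec, hMSt, Matrix.one_mulVec]
  -- rewrite LHS
  have hLHS : vecE (M.mulVec δ) - g0 = vecE (M.mulVec (δ - e)) := by
    rw [Matrix.mulVec_sub, ← hvecEg0, ← hMe]
    simp only [vecE]
    rw [map_sub]
  -- entrywise Taylor bound
  have hentry : ∀ j, |(δ - e) j| ≤ (L : ℝ) / 2 * ΔS ^ 2 := by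
    intro j
    have hinner : (inner ℝ (gradient f x0) (vecE (fun i => S i j)) : ℝ) = e j := by
      rw [he]
      simp only [Matrix.mulVec, dotProduct, Matrix.transpose_apply]
      rw [show (inner ℝ (gradient f x0) (vecE (fun i => S i j)) : ℝ)
          = ∑ i, (gradient f x0 i) * S i j by
            rw [PiLp.inner_apply]
            exact Finset.sum_congr rfl fun i _ => by simp [vecE, mul_comm]]
      exact Finset.sum_congr rfl fun i _ => mul_comm _ _
    have := taylor_quad f U hU x0 ΔS hsub hf L hlip (vecE (fun i => S i j)) (hcol j)
    rw [hinner] at this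
    simpa [hδ, Pi.sub_apply] using this
  -- assemble
  have hnorm1 : ‖vecE (δ - e)‖ ≤ Real.sqrt N * ((L : ℝ) / 2 * ΔS ^ 2) :=
    norm_vecE_le hN _ _ hentry
  have hnorm2 : ‖vecE (M.mulVec (δ - e))‖ ≤ l2opNorm M * (Real.sqrt N * ((L : ℝ) / 2 * ΔS ^ 2)) :=
    le_trans (vecE_mulVec_norm_le M (δ - e))
      (mul_le_mul_of_nonneg_left hnorm1 (norm_nonneg _))
  -- scaling identity
  have hscale : ((ΔS⁻¹ • S) * (ΔS⁻¹ • S).transpose)⁻¹ * (ΔS⁻¹ • S) = ΔS • M := by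
    have h1 : (ΔS⁻¹ • S) * (ΔS⁻¹ • S).transpose = (ΔS⁻¹ * ΔS⁻¹) • (S * S.transpose) := by
      rw [Matrix.transpose_smul, Matrix.smul_mul, Matrix.mul_smul, smul_smul]
    have h2 : ((ΔS⁻¹ • S) * (ΔS⁻¹ • S).transpose)⁻¹ = (ΔS * ΔS) • (S * S.transpose)⁻¹ := by
      rw [h1]
      apply Matrix.inv_eq_right_inv
      rw [Matrix.smul_mul, Matrix.mul_smul, smul_smul, Matrix.mul_nonsing_inv _ hdet]
      rw [show ΔS⁻¹ * ΔS⁻¹ * (ΔS * ΔS) = 1 by field_simp]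
      rw [one_smul]
    have hne : ΔS ≠ 0 := ne_of_gt hΔpos
    rw [h2, Matrix.smul_mul, Matrix.mul_smul, smul_smul, hM]
    congr 1
    field_simp
  have hopn : l2opNorm (((ΔS⁻¹ • S) * (ΔS⁻¹ • S).transpose)⁻¹ * (ΔS⁻¹ • S))
      = ΔS * l2opNorm M := by
    rw [hscale, l2opNorm_smul, abs_of_pos hΔpos]
  rw [hopn]
  calc ‖vecE (M.mulVec δ) - g0‖ = ‖vecE (M.mulVec (δ - e))‖ := by rw [hLHS]
    _ ≤ l2opNorm M * (Real.sqrt N * ((L : ℝ) / 2 * ΔS ^ 2)) := hnorm2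
    _ = Real.sqrt N / 2 * (L : ℝ) * (ΔS * l2opNorm M) * ΔS := by ring

end
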